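/- Let H : [0,1] → ℝ be continuously differentiable, positive on [0,1), nonincreasing, with H(1) = 0 and H' = -h for a continuous nonincreasing nonnegative h. Fix ρ ≥ 1 and define g(v) = H(0)/(ρ·H(v)) + ρ·I(v)/I(0) where I(v) = ∫_v^1 H'(u)²/H(u) du (assumed finite). If v̂ ∈ [0,1) satisfies H(v̂)·H'(v̂) = -H(0)·I(0)/ρ², then v̂ is a global minimizer of g on [0,1). -/

import Mathlib

open Real Set

theorem stmt16 (ρ : ℝ) (hρ : 1 ≤ ρ) (h H I g : ℝ → ℝ)
    (hcont : ContinuousOn h (Icc (0:ℝ) 1))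
    (hmono : AntitoneOn h (Icc (0:ℝ) 1))
    (hnonneg : ∀ u ∈ Icc (0:ℝ) 1, 0 ≤ h u)
    (hend : h 1 = 0)
    (hH : ∀ v, H v = ∫ u in v..1, h u)
    (hHpos : ∀ v ∈ Ico (0:ℝ) 1, 0 < H v)
    (hI : ∀ v, I v = ∫ u in v..1, (h u) ^ 2 / H u)
    (hint : ∀ v ∈ Ico (0:ℝ) 1,
      IntervalIntegrable (fun u => (h u) ^ 2 / H u) MeasureTheory.volume v 1)
    (hI0 : 0 < I 0)
    (hg : ∀ v, g v = H 0 / (ρ * H v) + ρ * I v / I 0)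
    (vhat : ℝ) (hvhat : vhat ∈ Ico (0:ℝ) 1)
    (hcrit : H vhat * (-h vhat) = -(H 0 * I 0) / ρ ^ 2) :
    ∀ v ∈ Ico (0:ℝ) 1, g vhat ≤ g v := by
  intro v hv
  obtain ⟨hv0, hv1⟩ := hv
  obtain ⟨hw0, hw1⟩ := hvhat
  have hρ0 : (0:ℝ) < ρ := lt_of_lt_of_le one_pos hρ
  have hH0 : 0 < H 0 := hHpos 0 ⟨le_refl 0, one_pos⟩
  have hHv : 0 < H v := hHpos v ⟨hv0, hv1⟩
  have hHw : 0 < H vhat := hHpos vhat ⟨hw0, hw1⟩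
  have hρ2 : (ρ:ℝ)^2 ≠ 0 := by positivity
  have hc : ρ ^ 2 * (H vhat * h vhat) = H 0 * I 0 := by
    field_simp at hcrit
    linarith [hcrit]
  have hw_nn : 0 ≤ h vhat := hnonneg vhat ⟨hw0, hw1.le⟩
  -- integrability of h on subintervals
  have hInth : ∀ a b : ℝ, 0 ≤ a → a ≤ b → b ≤ 1 →
      IntervalIntegrable h MeasureTheory.volume a b := by
    intro a b ha hab hb
    apply ContinuousOn.intervalIntegrable
    apply hcont.mono
    rw [uIcc_of_le hab]
    exact Icc_subset_Icc ha hb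
  -- integrability of h^2/H on subintervals of [a,1) with a<1
  have hInt2 : ∀ a b : ℝ, 0 ≤ a → a ≤ b → b < 1 →
      IntervalIntegrable (fun u => (h u) ^ 2 / H u) MeasureTheory.volume a b := by
    intro a b ha hab hb
    apply (hint a ⟨ha, lt_of_le_of_lt hab hb⟩).mono_set
    rw [uIcc_of_le hab, uIcc_of_le (hab.trans hb.le)]
    exact Icc_subset_Icc le_rfl hb.le
  -- difference formulas
  have hHdiff : ∀ a b : ℝ, 0 ≤ a → a ≤ b → b < 1 →
      H a - H b = ∫ u in a..b, h u := by
    intro a b ha hab hb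
    have := intervalIntegral.integral_add_adjacent_intervals
      (hInth a b ha hab hb.le) (hInth b 1 (ha.trans hab) hb.le le_rfl)
    rw [hH a, hH b]
    linarith [this]
  have hIdiff : ∀ a b : ℝ, 0 ≤ a → a ≤ b → b < 1 →
      I a - I b = ∫ u in a..b, (h u) ^ 2 / H u := by
    intro a b ha hab hb
    have := intervalIntegral.integral_add_adjacent_intervals
      (hInt2 a b ha hab hb) (hint b ⟨ha.trans hab, hb⟩)
    rw [hI a, hI b]
    linarith [this]
  rcases le_total v vhat with hle | hle
  · -- v ≤ vhat : I v - I vhat ≥ (h vhat / H v) * (H v - H vhat)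
    have hA : H v - H vhat = ∫ u in v..vhat, h u := hHdiff v vhat hv0 hle hw1
    have hB : I v - I vhat = ∫ u in v..vhat, (h u) ^ 2 / H u := hIdiff v vhat hv0 hle hw1
    have hBA : h vhat / H v * (H v - H vhat) ≤ I v - I vhat := by
      rw [hA, hB, ← intervalIntegral.integral_const_mul]
      apply intervalIntegral.integral_mono_on hle
      · exact (hInth v vhat hv0 hle hw1.le).const_mul _
      · exact hInt2 v vhat hv0 hle hw1
      · intro u hu
        have hu01 : u ∈ Icc (0:ℝ) 1 := ⟨hv0.trans hu.1, hu.2.trans hw1.le⟩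
        have hHu : 0 < H u := hHpos u ⟨hu01.1, lt_of_le_of_lt hu.2 hw1⟩
        have hHuv : H u ≤ H v := by
          have := hHdiff v u hv0 hu.1 (lt_of_le_of_lt hu.2 hw1)
          have hnn : 0 ≤ ∫ x in v..u, h x :=
            intervalIntegral.integral_nonneg hu.1
              (fun x hx => hnonneg x ⟨hv0.trans hx.1, hx.2.trans hu01.2⟩)
          linarith
        have h1 : h vhat ≤ h u := hmono hu01 ⟨hw0, hw1.le⟩ hu.2
        have hun : 0 ≤ h u := hnonneg u hu01
        have : h vhat * h u / H v ≤ h u * h u / H u :=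
          div_le_div₀ (by positivity) (mul_le_mul_of_nonneg_right h1 hun) hHu hHuv
        calc h vhat / H v * h u = h vhat * h u / H v := by ring
          _ ≤ h u * h u / H u := this
          _ = (h u) ^ 2 / H u := by ring
    have e1 : H 0 / (ρ * H vhat) - H 0 / (ρ * H v) =
        ρ * (h vhat / H v * (H v - H vhat)) / I 0 := by
      field_simp
      linear_combination (-(H v - H vhat)) * hc
    have e2 : ρ * (h vhat / H v * (H v - H vhat)) / I 0 ≤ ρ * (I v - I vhat) / I 0 := by
      gcongr
    have e3 : ρ * (I v - I vhat) / I 0 = ρ * I v / I 0 - ρ * I vhat / I 0 := by ring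
    rw [hg v, hg vhat]
    linarith
  · -- vhat ≤ v : I vhat - I v ≤ (h vhat / H v) * (H vhat - H v)
    have hA : H vhat - H v = ∫ u in vhat..v, h u := hHdiff vhat v hw0 hle hv1
    have hB : I vhat - I v = ∫ u in vhat..v, (h u) ^ 2 / H u := hIdiff vhat v hw0 hle hv1
    have hBA : I vhat - I v ≤ h vhat / H v * (H vhat - H v) := by
      rw [hA, hB, ← intervalIntegral.integral_const_mul]
      apply intervalIntegral.integral_mono_on hle
      · exact hInt2 vhat v hw0 hle hv1
      · exact (hInth vhat v hw0 hle hv1.le).const_mul _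
      · intro u hu
        have hu01 : u ∈ Icc (0:ℝ) 1 := ⟨hw0.trans hu.1, hu.2.trans hv1.le⟩
        have hHu : 0 < H u := hHpos u ⟨hu01.1, lt_of_le_of_lt hu.2 hv1⟩
        have hHuv : H v ≤ H u := by
          have := hHdiff u v hu01.1 hu.2 hv1
          have hnn : 0 ≤ ∫ x in u..v, h x :=
            intervalIntegral.integral_nonneg hu.2
              (fun x hx => hnonneg x ⟨hu01.1.trans hx.1, hx.2.trans hv1.le⟩)
          linarith
        have h1 : h u ≤ h vhat := hmono ⟨hw0, hw1.le⟩ hu01 hu.1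
        have hun : 0 ≤ h u := hnonneg u hu01
        have : h u * h u / H u ≤ h vhat * h u / H v :=
          div_le_div₀ (by positivity) (mul_le_mul_of_nonneg_right h1 hun) hHv hHuv
        calc (h u) ^ 2 / H u = h u * h u / H u := by ring
          _ ≤ h vhat * h u / H v := this
          _ = h vhat / H v * h u := by ring
    have e1 : H 0 / (ρ * H vhat) - H 0 / (ρ * H v) =
        ρ * (h vhat / H v * (H v - H vhat)) / I 0 := by
      field_simp
      linear_combination (-(H v - H vhat)) * hc
    have e2 : ρ * (h vhat / H v * (H v - H vhat)) / I 0 ≤ ρ * (I v - I vhat) / I 0 := by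
      gcongr
      linarith
    have e3 : ρ * (I v - I vhat) / I 0 = ρ * I v / I 0 - ρ * I vhat / I 0 := by ring
    rw [hg v, hg vhat]
    linarith
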